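/- arXiv:0810.0046 — 2 statements merged into one kernel-verified Lean document; each statement's English description precedes it below -/
import Mathlib

section
/- Fix θ₁ > 0, θ₂ ∈ ℝ, T > 0. For each integer k ≥ 1 let ℓ_k = √(θ₁k² − θ₂²/4) (assume θ₁k² > θ₂²/4 for all k ≥ 1) and b = −θ₂/2. Then lim_{k→∞} k² ∫₀ᵀ [ (1/ℓ_k²) ∫₀ᵗ e^{−2b(t−s)} sin²(ℓ_k(t−s)) ds ] dt = C(θ₂,T)/θ₁, where C(θ₂,T) = (e^{θ₂T} − θ₂T − 1)/(2θ₂²) for θ₂ ≠ 0 and T²/4 for θ₂ = 0. -/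
open intervalIntegral MeasureTheory Filter

lemma exp_cos_integral (a ω t : ℝ) (hω : ω ≠ 0) :
    (∫ τ in (0:ℝ)..t, Real.exp (a*τ) * Real.cos (ω*τ))
      = ((Complex.exp ((a + ω*Complex.I)*t) - 1) / (a + ω*Complex.I)).re := by
  set c : ℂ := a + ω*Complex.I with hc
  have hc0 : c ≠ 0 := by
    intro h
    have : c.im = 0 := by rw [h]; simp
    simp [hc] at this
    exact hω this
  have h1 : ∀ τ : ℝ, Real.exp (a*τ) * Real.cos (ω*τ) = (Complex.exp (c*τ)).re := by
    intro τ
    rw [Complex.exp_re]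
    congr 2 <;>
      simp [hc, add_mul, Complex.mul_re, Complex.mul_im, Complex.add_re, Complex.add_im]
  have hint : IntervalIntegrable (fun τ : ℝ => Complex.exp (c*τ)) volume 0 t :=
    (Complex.continuous_exp.comp (continuous_const.mul Complex.continuous_ofReal)).intervalIntegrable _ _
  calc (∫ τ in (0:ℝ)..t, Real.exp (a*τ) * Real.cos (ω*τ))
      = ∫ τ in (0:ℝ)..t, Complex.reCLM (Complex.exp (c*τ)) := by
        simp_rw [h1]; rfl
    _ = Complex.reCLM (∫ τ in (0:ℝ)..t, Complex.exp (c*τ)) :=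
        Complex.reCLM.intervalIntegral_comp_comm hint
    _ = ((Complex.exp (c*t) - 1) / c).re := by
        rw [integral_exp_mul_complex hc0]
        simp

set_option maxHeartbeats 1000000 in
/-- Asymptotics of `k² E∫₀ᵀ u_k²(t) dt` (the inner expression is
`E[u_k²(t)]` from the Itô isometry). -/
theorem statement6 (θ₁ θ₂ T : ℝ) (hθ₁ : 0 < θ₁) (hT : 0 < T)
    (hosc : ∀ k : ℕ, 1 ≤ k → θ₂ ^ 2 / 4 < θ₁ * (k : ℝ) ^ 2)
    (b : ℝ) (hbdef : b = -θ₂ / 2)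
    (ℓ : ℕ → ℝ) (hℓ : ∀ k, ℓ k = Real.sqrt (θ₁ * (k : ℝ) ^ 2 - θ₂ ^ 2 / 4))
    (C : ℝ) (hC : C = if θ₂ ≠ 0 then (Real.exp (θ₂ * T) - θ₂ * T - 1) / (2 * θ₂ ^ 2) else T ^ 2 / 4) :
    Filter.Tendsto
      (fun k : ℕ => (k : ℝ) ^ 2 *
        ∫ t in (0 : ℝ)..T, (1 / (ℓ k) ^ 2) *
          ∫ s in (0 : ℝ)..t, Real.exp (-2 * b * (t - s)) * Real.sin (ℓ k * (t - s)) ^ 2)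
      Filter.atTop (nhds (C / θ₁)) := by
  -- basic facts about ℓ
  have hℓsq : ∀ k : ℕ, 1 ≤ k → (ℓ k) ^ 2 = θ₁ * (k : ℝ) ^ 2 - θ₂ ^ 2 / 4 := by
    intro k hk
    rw [hℓ, Real.sq_sqrt (by linarith [hosc k hk])]
  have hℓpos : ∀ k : ℕ, 1 ≤ k → 0 < ℓ k := by
    intro k hk
    rw [hℓ]
    exact Real.sqrt_pos.2 (by linarith [hosc k hk])
  -- the primitive of exp(θ₂ ·)
  set A : ℝ → ℝ := fun t => if θ₂ = 0 then t else (Real.exp (θ₂*t) - 1)/θ₂ with hA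
  have hE : ∀ t : ℝ, (∫ τ in (0:ℝ)..t, Real.exp (θ₂*τ)) = A t := by
    intro t
    by_cases h0 : θ₂ = 0
    · simp [hA, h0]
    · have hD : ∀ τ : ℝ, HasDerivAt (fun u => (Real.exp (θ₂*u) - 1)/θ₂) (Real.exp (θ₂*τ)) τ := by
        intro τ
        have h1 : HasDerivAt (fun u : ℝ => θ₂*u) θ₂ τ := by simpa using (hasDerivAt_id τ).const_mul θ₂
        have h2 := (h1.exp.sub_const 1).div_const θ₂
        rw [mul_div_cancel_right₀ _ h0] at h2
        exact h2
      rw [integral_eq_sub_of_hasDerivAt (fun τ _ => hD τ)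
        ((Real.continuous_exp.comp (continuous_const.mul continuous_id)).intervalIntegrable _ _)]
      simp [hA, h0]
  have hAcont : Continuous A := by
    rw [hA]
    split_ifs with h0
    · exact continuous_id
    · fun_prop
  -- the main outer integral
  have hmain : (∫ t in (0:ℝ)..T, A t) = 2*C := by
    by_cases h0 : θ₂ = 0
    · simp only [hA, h0, if_true, ite_true, eq_self_iff_true]
      rw [hC]
      simp [h0, integral_id]
      ring
    · have hD : ∀ t : ℝ, HasDerivAt (fun u => (Real.exp (θ₂*u)/θ₂ - u)/θ₂) ((Real.exp (θ₂*t) - 1)/θ₂) t := by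
        intro t
        have h1 : HasDerivAt (fun u : ℝ => θ₂*u) θ₂ t := by simpa using (hasDerivAt_id t).const_mul θ₂
        have h2 := ((h1.exp.div_const θ₂).sub (hasDerivAt_id t)).div_const θ₂
        rw [mul_div_cancel_right₀ _ h0] at h2
        exact h2
      have : (∫ t in (0:ℝ)..T, A t) = ∫ t in (0:ℝ)..T, (Real.exp (θ₂*t) - 1)/θ₂ := by
        simp [hA, h0]
      rw [this, integral_eq_sub_of_hasDerivAt (fun t _ => hD t)
        (by apply Continuous.intervalIntegrable; fun_prop)]
      rw [hC, if_pos h0]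
      field_simp
      simp only [mul_zero, Real.exp_zero]
      ring
  -- the oscillatory term
  set G : ℕ → ℝ → ℝ := fun k t =>
    ((Complex.exp ((θ₂ + (2*ℓ k)*Complex.I)*t) - 1) / (θ₂ + (2*ℓ k)*Complex.I)).re with hG
  have hGcont : ∀ k, Continuous (G k) := by
    intro k
    apply Complex.continuous_re.comp
    apply Continuous.div_const
    fun_prop
  -- rewrite of inner integral
  have hinner : ∀ k : ℕ, 1 ≤ k → ∀ t : ℝ,
      (∫ s in (0:ℝ)..t, Real.exp (-2*b*(t-s)) * Real.sin (ℓ k*(t-s))^2)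
        = A t / 2 - G k t / 2 := by
    intro k hk t
    have hb : -2*b = θ₂ := by rw [hbdef]; ring
    have h1 : (∫ s in (0:ℝ)..t, Real.exp (-2*b*(t-s)) * Real.sin (ℓ k*(t-s))^2)
        = ∫ τ in (0:ℝ)..t, Real.exp (θ₂*τ) * Real.sin (ℓ k*τ)^2 := by
      rw [hb]
      have := intervalIntegral.integral_comp_sub_left
        (fun τ => Real.exp (θ₂*τ) * Real.sin (ℓ k*τ)^2) t (a := 0) (b := t)
      simpa using this
    rw [h1]
    have h2 : ∀ τ : ℝ, Real.exp (θ₂*τ) * Real.sin (ℓ k*τ)^2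
        = Real.exp (θ₂*τ)/2 - (Real.exp (θ₂*τ) * Real.cos ((2*ℓ k)*τ))/2 := by
      intro τ
      rw [Real.sin_sq_eq_half_sub]
      ring_nf
    simp_rw [h2]
    rw [intervalIntegral.integral_sub (by apply Continuous.intervalIntegrable; fun_prop)
      (by apply Continuous.intervalIntegrable; fun_prop)]
    rw [intervalIntegral.integral_div, intervalIntegral.integral_div, hE,
      exp_cos_integral θ₂ (2*ℓ k) t (by have := hℓpos k hk; positivity)]
    simp only [hG]
    push_cast
    ring_nf
  -- outer integral rewrite
  have houter : ∀ k : ℕ, 1 ≤ k →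
      ((k:ℝ)^2 * ∫ t in (0:ℝ)..T, (1/(ℓ k)^2) *
          ∫ s in (0:ℝ)..t, Real.exp (-2*b*(t-s)) * Real.sin (ℓ k*(t-s))^2)
        = ((k:ℝ)^2 * (1/(ℓ k)^2)) * (C - (∫ t in (0:ℝ)..T, G k t)/2) := by
    intro k hk
    have h5 : (∫ t in (0:ℝ)..T, (1/(ℓ k)^2) *
          ∫ s in (0:ℝ)..t, Real.exp (-2*b*(t-s)) * Real.sin (ℓ k*(t-s))^2)
        = (1/(ℓ k)^2) * ∫ t in (0:ℝ)..T, (A t/2 - G k t/2) := by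
      rw [← intervalIntegral.integral_const_mul]
      apply intervalIntegral.integral_congr
      intro t _
      dsimp only
      rw [hinner k hk t]
    rw [h5, intervalIntegral.integral_sub
      ((hAcont.div_const 2).intervalIntegrable _ _)
      (((hGcont k).div_const 2).intervalIntegrable _ _),
      intervalIntegral.integral_div, intervalIntegral.integral_div, hmain]
    ring
  -- ℓ tends to infinity
  have hargtop : Tendsto (fun k : ℕ => θ₁*(k:ℝ)^2 - θ₂^2/4) atTop atTop := by
    apply tendsto_atTop_add_const_right
    exact ((tendsto_pow_atTop two_ne_zero).comp
      tendsto_natCast_atTop_atTop).const_mul_atTop hθ₁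
  have hℓtop : Tendsto ℓ atTop atTop := by
    rw [tendsto_atTop]
    intro m
    filter_upwards [hargtop.eventually_ge_atTop (m^2 ⊔ 0)] with k hk
    rw [hℓ]
    calc m ≤ |m| := le_abs_self m
      _ = Real.sqrt (m^2) := (Real.sqrt_sq_eq_abs m).symm
      _ ≤ _ := Real.sqrt_le_sqrt (le_trans (le_sup_left) hk)
  -- oscillatory term tends to zero
  have hRlim : Tendsto (fun k => ∫ t in (0:ℝ)..T, G k t) atTop (nhds 0) := by
    set M := Real.exp (abs θ₂ * T) + 1 with hM
    have hMpos : 0 < M := by positivity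
    apply squeeze_zero_norm' (a := fun k => M/(2*ℓ k)*T)
    · filter_upwards [eventually_ge_atTop 1] with k hk
      have hkpos := hℓpos k hk
      have hb2 : ∀ t ∈ Set.uIoc (0:ℝ) T, ‖G k t‖ ≤ M/(2*ℓ k) := by
        intro t ht
        rw [Set.uIoc_of_le hT.le] at ht
        have ht0 : 0 < t := ht.1
        have htT : t ≤ T := ht.2
        set c : ℂ := θ₂ + (2*ℓ k)*Complex.I with hcdef
        have hre : ((c*(t:ℂ)).re) = θ₂*t := by
          simp [hcdef, add_mul, Complex.add_re, Complex.mul_re, Complex.mul_im]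
        have hnum : ‖Complex.exp (c*(t:ℂ)) - 1‖ ≤ M := by
          calc ‖Complex.exp (c*(t:ℂ)) - 1‖
              ≤ ‖Complex.exp (c*(t:ℂ))‖ + ‖(1:ℂ)‖ :=
                norm_sub_le _ _
            _ ≤ M := by
                rw [Complex.norm_exp, hre, norm_one, hM]
                have : θ₂*t ≤ abs θ₂ * T := by
                  calc θ₂*t ≤ abs θ₂ * t := mul_le_mul_of_nonneg_right (le_abs_self _) ht0.le
                    _ ≤ abs θ₂ * T := mul_le_mul_of_nonneg_left htT (abs_nonneg _)
                have := Real.exp_le_exp.2 this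
                linarith
        have hden : 2*ℓ k ≤ ‖c‖ := by
          have h6 : c.im = 2*ℓ k := by simp [hcdef]
          calc 2*ℓ k = |c.im| := by rw [h6]; exact (abs_of_pos (by positivity)).symm
            _ ≤ ‖c‖ := Complex.abs_im_le_norm c
        calc ‖G k t‖ = |((Complex.exp (c*(t:ℂ)) - 1) / c).re| := by rw [hG]; rfl
          _ ≤ ‖(Complex.exp (c*(t:ℂ)) - 1) / c‖ := Complex.abs_re_le_norm _
          _ = ‖Complex.exp (c*(t:ℂ)) - 1‖ / ‖c‖ := norm_div _ _
          _ ≤ M/(2*ℓ k) := div_le_div₀ hMpos.le hnum (by positivity) hden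
      calc ‖∫ t in (0:ℝ)..T, G k t‖ ≤ M/(2*ℓ k) * |T - 0| :=
            intervalIntegral.norm_integral_le_of_norm_le_const hb2
        _ = M/(2*ℓ k)*T := by rw [sub_zero, abs_of_pos hT]
    · have h7 : Tendsto (fun k => 2*ℓ k) atTop atTop := hℓtop.const_mul_atTop two_pos
      have h8 := (tendsto_const_nhds (x := M) (f := atTop (α:=ℕ))).div_atTop h7
      simpa using h8.mul_const T
  -- the ratio limit
  have hratio : Tendsto (fun k : ℕ => (k:ℝ)^2 * (1/(ℓ k)^2)) atTop (nhds (1/θ₁)) := by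
    have h1 : Tendsto (fun k : ℕ => θ₁ - (θ₂^2/4)/(k:ℝ)^2) atTop (nhds θ₁) := by
      have hpow : Tendsto (fun k : ℕ => (k:ℝ)^2) atTop atTop :=
        Tendsto.comp (tendsto_pow_atTop (n:=2) two_ne_zero) tendsto_natCast_atTop_atTop
      have h2 : Tendsto (fun k : ℕ => (θ₂^2/4)/(k:ℝ)^2) atTop (nhds 0) :=
        Tendsto.div_atTop tendsto_const_nhds hpow
      simpa using (tendsto_const_nhds (x := θ₁)).sub h2
    have h2 := (tendsto_const_nhds (x := (1:ℝ))).div h1 hθ₁.ne'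
    apply Filter.Tendsto.congr' _ h2
    filter_upwards [eventually_ge_atTop 1] with k hk
    have hkR : (0:ℝ) < (k:ℝ) := by exact_mod_cast Nat.pos_of_ne_zero (by omega)
    have h3 : θ₁*(k:ℝ)^2 - θ₂^2/4 ≠ 0 := ne_of_gt (by linarith [hosc k hk])
    rw [hℓsq k hk]
    simp only [Pi.div_apply]
    field_simp
  -- conclusion
  have hfinal := hratio.mul ((tendsto_const_nhds (x := C)).sub (hRlim.div_const 2))
  have hval : (1/θ₁) * (C - 0/2) = C/θ₁ := by ring
  rw [hval] at hfinal
  apply Filter.Tendsto.congr' _ hfinal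
  filter_upwards [eventually_ge_atTop 1] with k hk
  exact (houter k hk).symm
end

section
/- Let b ∈ ℝ and, for each k, let ℓ_k = √(a²k² − b²) with a ≥ 1 and |b| ≤ 1/2. Then for every T > 0, lim_{k→∞} ∫₀ᵀ (1/ℓ_k²) ∫₀ᵗ e^{−2b(t−s)} (ℓ_k cos(ℓ_k(t−s)) − b sin(ℓ_k(t−s)))² ds dt = C(−2b, T), where C(θ₂,T) = (e^{θ₂T} − θ₂T − 1)/(2θ₂²) for θ₂ ≠ 0 and T²/4 for θ₂ = 0. -/
open Real intervalIntegral

noncomputable def Phi (b L u : ℝ) : ℝ :=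
  Real.exp (-2*b*u) * (b * Real.cos (2*L*u) + L * Real.sin (2*L*u)) / 4

lemma hasDerivAt_Phi (b L u : ℝ) :
    HasDerivAt (fun u => Phi b L u)
      (Real.exp (-2*b*u) * ((L^2-b^2)/2 * Real.cos (2*L*u) - b*L*Real.sin (2*L*u))) u := by
  have h1 : HasDerivAt (fun u : ℝ => Real.exp (-2*b*u)) (Real.exp (-2*b*u) * (-2*b)) u := by
    simpa using ((hasDerivAt_id u).const_mul (-2*b)).exp
  have h2 : HasDerivAt (fun u : ℝ => Real.cos (2*L*u)) (-Real.sin (2*L*u) * (2*L)) u := by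
    simpa using ((hasDerivAt_id u).const_mul (2*L)).cos
  have h3 : HasDerivAt (fun u : ℝ => Real.sin (2*L*u)) (Real.cos (2*L*u) * (2*L)) u := by
    simpa using ((hasDerivAt_id u).const_mul (2*L)).sin
  have := ((h1.mul ((h2.const_mul b).add (h3.const_mul L))).div_const 4)
  refine this.congr_deriv ?_
  simp only [Pi.add_apply]
  ring

lemma trig_id (b L u : ℝ) :
    Real.exp (-2*b*u) * (L * Real.cos (L*u) - b * Real.sin (L*u))^2
      = Real.exp (-2*b*u) * ((L^2+b^2)/2)
        + Real.exp (-2*b*u) * ((L^2-b^2)/2 * Real.cos (2*L*u) - b*L*Real.sin (2*L*u)) := by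
  have h1 : Real.cos (2*L*u) = Real.cos (L*u)^2 - Real.sin (L*u)^2 := by
    rw [show 2*L*u = 2*(L*u) by ring, Real.cos_two_mul']
  have h2 : Real.sin (2*L*u) = 2 * Real.sin (L*u) * Real.cos (L*u) := by
    rw [show 2*L*u = 2*(L*u) by ring, Real.sin_two_mul]
  have h3 : Real.sin (L*u)^2 + Real.cos (L*u)^2 = 1 := Real.sin_sq_add_cos_sq _
  rw [h1, h2]
  linear_combination Real.exp (-2*b*u) * (L^2+b^2)/2 * h3

lemma inner_eq (b L t : ℝ) :
    (∫ s in (0:ℝ)..t, Real.exp (-2*b*(t-s)) * (L * Real.cos (L*(t-s)) - b * Real.sin (L*(t-s)))^2)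
      = (L^2+b^2)/2 * (∫ u in (0:ℝ)..t, Real.exp (-2*b*u)) + (Phi b L t - Phi b L 0) := by
  have hsub := intervalIntegral.integral_comp_sub_left
    (fun u => Real.exp (-2*b*u) * (L * Real.cos (L*u) - b * Real.sin (L*u))^2) t
    (a := 0) (b := t)
  simp only [sub_self, sub_zero] at hsub
  rw [hsub]
  have hcong : (∫ u in (0:ℝ)..t, Real.exp (-2*b*u) * (L * Real.cos (L*u) - b * Real.sin (L*u))^2)
      = ∫ u in (0:ℝ)..t, (Real.exp (-2*b*u) * ((L^2+b^2)/2)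
        + Real.exp (-2*b*u) * ((L^2-b^2)/2 * Real.cos (2*L*u) - b*L*Real.sin (2*L*u))) := by
    apply intervalIntegral.integral_congr
    intro u _
    exact trig_id b L u
  rw [hcong, intervalIntegral.integral_add, intervalIntegral.integral_mul_const]
  · congr 1
    · ring
    · exact intervalIntegral.integral_eq_sub_of_hasDerivAt
        (fun u _ => hasDerivAt_Phi b L u)
        (by apply Continuous.intervalIntegrable; fun_prop)
  · apply Continuous.intervalIntegrable; fun_prop
  · apply Continuous.intervalIntegrable; fun_prop

lemma A_cont (b : ℝ) : Continuous (fun t : ℝ => ∫ u in (0:ℝ)..t, Real.exp (-2*b*u)) := by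
  apply intervalIntegral.continuous_primitive
  intro a b'
  apply Continuous.intervalIntegrable
  fun_prop

lemma exp_arg_le (b u T : ℝ) (hb : |b| ≤ 1/2) (hu0 : 0 ≤ u) (huT : u ≤ T) : -2*b*u ≤ T := by
  have h1 : -b ≤ |b| := neg_le_abs b
  nlinarith

lemma A_bound (b T t : ℝ) (hb : |b| ≤ 1/2) (ht : t ∈ Set.Ioc 0 T) :
    |∫ u in (0:ℝ)..t, Real.exp (-2*b*u)| ≤ Real.exp T * T := by
  have h := intervalIntegral.norm_integral_le_of_norm_le_const (C := Real.exp T)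
    (f := fun u => Real.exp (-2*b*u)) (a := 0) (b := t) ?_
  · rw [Real.norm_eq_abs] at h
    calc |∫ u in (0:ℝ)..t, Real.exp (-2*b*u)| ≤ Real.exp T * |t - 0| := h
    _ ≤ Real.exp T * T := by
        rw [sub_zero, abs_of_pos ht.1]
        exact mul_le_mul_of_nonneg_left ht.2 (Real.exp_nonneg _)
  · intro u hu
    rw [Set.uIoc_of_le (le_of_lt ht.1)] at hu
    rw [Real.norm_eq_abs, Real.abs_exp]
    exact Real.exp_le_exp.mpr (exp_arg_le b u T hb (le_of_lt hu.1) (hu.2.trans ht.2))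

lemma Phi_bound (b L T u : ℝ) (hb : |b| ≤ 1/2) (hL : 1 ≤ L) (hu0 : 0 ≤ u) (huT : u ≤ T) :
    |Phi b L u| ≤ Real.exp T * L / 2 := by
  unfold Phi
  rw [abs_div, abs_mul, Real.abs_exp, show |(4:ℝ)| = 4 from by norm_num]
  have h1 : Real.exp (-2*b*u) ≤ Real.exp T :=
    Real.exp_le_exp.mpr (exp_arg_le b u T hb hu0 huT)
  have h2 : |b * Real.cos (2*L*u) + L * Real.sin (2*L*u)| ≤ 2 * L := by
    calc |b * Real.cos (2*L*u) + L * Real.sin (2*L*u)|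
        ≤ |b * Real.cos (2*L*u)| + |L * Real.sin (2*L*u)| := abs_add_le _ _
      _ ≤ |b| * 1 + |L| * 1 := by
          rw [abs_mul, abs_mul]
          gcongr
          · exact Real.abs_cos_le_one _
          · exact Real.abs_sin_le_one _
      _ ≤ 2 * L := by rw [abs_of_pos (by linarith : (0:ℝ) < L)]; linarith
  have h3 : Real.exp (-2*b*u) * |b * Real.cos (2*L*u) + L * Real.sin (2*L*u)|
      ≤ Real.exp T * (2*L) := mul_le_mul h1 h2 (abs_nonneg _) (Real.exp_nonneg _)
  linarith

lemma key (b T L : ℝ) (hb : |b| ≤ 1/2) (hT : 0 < T) (hL : 1 ≤ L) :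
    |(∫ t in (0:ℝ)..T, (1/L^2) *
        ∫ s in (0:ℝ)..t, Real.exp (-2*b*(t-s)) * (L * Real.cos (L*(t-s)) - b * Real.sin (L*(t-s)))^2)
      - (∫ t in (0:ℝ)..T, (∫ u in (0:ℝ)..t, Real.exp (-2*b*u)) / 2)|
      ≤ (Real.exp T * (T+2) * T) / L := by
  have hL0 : (0:ℝ) < L := by linarith
  set A : ℝ → ℝ := fun t => ∫ u in (0:ℝ)..t, Real.exp (-2*b*u) with hA
  have hF : (∫ t in (0:ℝ)..T, (1/L^2) *
        ∫ s in (0:ℝ)..t, Real.exp (-2*b*(t-s)) * (L * Real.cos (L*(t-s)) - b * Real.sin (L*(t-s)))^2)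
      = ∫ t in (0:ℝ)..T, (1/L^2) * ((L^2+b^2)/2 * A t + (Phi b L t - Phi b L 0)) := by
    apply intervalIntegral.integral_congr
    intro t _
    dsimp only
    rw [inner_eq]
  rw [hF]
  have hint1 : IntervalIntegrable (fun t => (1/L^2) * ((L^2+b^2)/2 * A t + (Phi b L t - Phi b L 0)))
      MeasureTheory.volume 0 T := by
    apply Continuous.intervalIntegrable
    have := A_cont b
    unfold Phi
    fun_prop
  have hint2 : IntervalIntegrable (fun t => A t / 2) MeasureTheory.volume 0 T := by
    apply Continuous.intervalIntegrable
    have := A_cont b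
    fun_prop
  rw [← intervalIntegral.integral_sub hint1 hint2]
  have h := intervalIntegral.norm_integral_le_of_norm_le_const
      (C := Real.exp T * (T+2) / L)
      (f := fun t => (1/L^2) * ((L^2+b^2)/2 * A t + (Phi b L t - Phi b L 0)) - A t / 2)
      (a := 0) (b := T) ?_
  · rw [Real.norm_eq_abs] at h
    calc _ ≤ Real.exp T * (T+2) / L * |T - 0| := h
      _ = (Real.exp T * (T+2) * T) / L := by rw [sub_zero, abs_of_pos hT]; ring
  · intro t ht
    rw [Set.uIoc_of_le (le_of_lt hT)] at ht
    rw [Real.norm_eq_abs]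
    have hid : (1/L^2) * ((L^2+b^2)/2 * A t + (Phi b L t - Phi b L 0)) - A t / 2
        = (b^2/(2*L^2)) * A t + (Phi b L t - Phi b L 0)/L^2 := by
      field_simp
      ring
    rw [hid]
    have hAb := A_bound b T t hb ht
    have hP1 := Phi_bound b L T t hb hL (le_of_lt ht.1) ht.2
    have hP0 := Phi_bound b L T 0 hb hL le_rfl (le_of_lt hT)
    have hb2 : b^2 ≤ 1/4 := by nlinarith [abs_nonneg b, sq_abs b]
    have hexp : (0:ℝ) < Real.exp T := Real.exp_pos T
    calc |(b^2/(2*L^2)) * A t + (Phi b L t - Phi b L 0)/L^2|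
        ≤ |(b^2/(2*L^2)) * A t| + |(Phi b L t - Phi b L 0)/L^2| := abs_add_le _ _
      _ ≤ (b^2/(2*L^2)) * (Real.exp T * T) + (Real.exp T * L / 2 + Real.exp T * L / 2)/L^2 := by
          gcongr
          · rw [abs_mul, abs_of_nonneg (by positivity : (0:ℝ) ≤ b^2/(2*L^2))]
            exact mul_le_mul_of_nonneg_left hAb (by positivity)
          · rw [abs_div, abs_of_nonneg (by positivity : (0:ℝ) ≤ L^2)]
            exact div_le_div_of_nonneg_right ((abs_sub _ _).trans (add_le_add hP1 hP0))
              (by positivity) |>.trans_eq rfl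
      _ ≤ Real.exp T * (T+2) / L := by
          have e2 : (Real.exp T * L / 2 + Real.exp T * L / 2)/L^2 = Real.exp T / L := by
            field_simp; ring
          have e3 : Real.exp T * (T+2)/L = Real.exp T * T / L + 2 * Real.exp T / L := by ring
          rw [e2, e3]
          have e4 : b^2/(2*L^2) * (Real.exp T * T) ≤ Real.exp T * T / L := by
            rw [div_mul_eq_mul_div, div_le_div_iff₀ (by positivity) hL0]
            have hXL : (0:ℝ) < Real.exp T * T * L := by positivity
            nlinarith [mul_le_mul_of_nonneg_right hb2 (le_of_lt hXL),
              mul_pos hXL (show (0:ℝ) < 2*L - 1/4 by linarith)]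
          have e5 : Real.exp T / L ≤ 2 * Real.exp T / L := by
            gcongr
            linarith
          linarith

lemma exp_integral (c : ℝ) (hc : c ≠ 0) (t : ℝ) :
    ∫ u in (0:ℝ)..t, Real.exp (c*u) = (Real.exp (c*t) - 1)/c := by
  have hderiv : ∀ u : ℝ, HasDerivAt (fun u => Real.exp (c*u)/c) (Real.exp (c*u)) u := by
    intro u
    have h1 : HasDerivAt (fun u : ℝ => Real.exp (c*u)) (Real.exp (c*u) * c) u := by
      simpa using ((hasDerivAt_id u).const_mul c).exp
    have := h1.div_const c
    simpa [mul_div_assoc, mul_div_cancel_right₀ _ hc] using this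
  rw [intervalIntegral.integral_eq_sub_of_hasDerivAt (fun u _ => hderiv u)
    (by apply Continuous.intervalIntegrable; fun_prop)]
  simp
  ring

lemma Cval (b T : ℝ) :
    (∫ t in (0:ℝ)..T, (∫ u in (0:ℝ)..t, Real.exp (-2*b*u)) / 2)
      = if (-2 * b) ≠ 0 then
          (Real.exp (-2 * b * T) - (-2 * b) * T - 1) / (2 * (-2 * b) ^ 2)
        else T ^ 2 / 4 := by
  by_cases hb : b = 0
  · subst hb
    simp only [neg_mul, mul_zero, neg_zero, zero_mul, ne_eq, not_true_eq_false, if_false,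
      Real.exp_zero]
    norm_num
    ring
  · have hc : (-2*b) ≠ 0 := by simpa using hb
    rw [if_pos (by simpa using hb)]
    have h1 : (fun t : ℝ => (∫ u in (0:ℝ)..t, Real.exp (-2*b*u)) / 2)
        = fun t : ℝ => Real.exp (-2*b*t) * (1/(-2*b)/2) + (-(1/(-2*b)/2)) := by
      funext t
      rw [exp_integral _ hc]
      field_simp
      ring
    rw [h1, intervalIntegral.integral_add, intervalIntegral.integral_mul_const,
      exp_integral _ hc, intervalIntegral.integral_const]
    · simp only [sub_zero, smul_eq_mul]
      field_simp
      ring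
    · apply Continuous.intervalIntegrable; fun_prop
    · apply Continuous.intervalIntegrable; fun_prop


/-- Asymptotics of `E∫₀ᵀ v_k²(t) dt` (written via the Itô isometry). -/
theorem statement8 (a b T : ℝ) (ha : 1 ≤ a) (hb : |b| ≤ 1/2) (hT : 0 < T)
    (ℓ : ℕ → ℝ) (hℓ : ∀ k, ℓ k = Real.sqrt (a ^ 2 * (k : ℝ) ^ 2 - b ^ 2))
    (C : ℝ) (hC : C = if (-2 * b) ≠ 0 then
        (Real.exp (-2 * b * T) - (-2 * b) * T - 1) / (2 * (-2 * b) ^ 2) else T ^ 2 / 4) :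
    Filter.Tendsto
      (fun k : ℕ =>
        ∫ t in (0 : ℝ)..T, (1 / (ℓ k) ^ 2) *
          ∫ s in (0 : ℝ)..t, Real.exp (-2 * b * (t - s)) *
            (ℓ k * Real.cos (ℓ k * (t - s)) - b * Real.sin (ℓ k * (t - s))) ^ 2)
      Filter.atTop (nhds C) := by
  have hb2 : b ^ 2 ≤ 1/4 := by nlinarith [abs_nonneg b, sq_abs b]
  have hCeq : C = ∫ t in (0:ℝ)..T, (∫ u in (0:ℝ)..t, Real.exp (-2*b*u)) / 2 := by
    rw [Cval, hC]
  have hlow : ∀ k : ℕ, (k : ℝ) - 1 ≤ ℓ k := by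
    intro k
    rw [hℓ]
    rcases le_or_gt ((k:ℝ) - 1) 0 with h | h
    · exact h.trans (Real.sqrt_nonneg _)
    · have hk1 : (1:ℝ) ≤ (k:ℝ) := by linarith
      rw [show ((k:ℝ) - 1) = Real.sqrt (((k:ℝ)-1)^2) from (Real.sqrt_sq (by linarith)).symm]
      apply Real.sqrt_le_sqrt
      nlinarith [mul_nonneg (show (0:ℝ) ≤ a^2-1 by nlinarith) (sq_nonneg ((k:ℝ)))]
  have hLtop : Filter.Tendsto ℓ Filter.atTop Filter.atTop := by
    apply Filter.tendsto_atTop_mono hlow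
    exact Filter.tendsto_atTop_add_const_right _ (-1)
      (tendsto_natCast_atTop_atTop (R := ℝ))
  have hL1 : ∀ᶠ k : ℕ in Filter.atTop, 1 ≤ ℓ k := by
    filter_upwards [Filter.eventually_atTop.mpr ⟨2, fun k hk => hk⟩] with k hk
    have : (2:ℝ) ≤ (k:ℝ) := by exact_mod_cast hk
    linarith [hlow k]
  rw [tendsto_iff_norm_sub_tendsto_zero]
  apply squeeze_zero' (Filter.Eventually.of_forall fun k => norm_nonneg _)
    (g := fun k => (Real.exp T * (T+2) * T) / ℓ k)
  · filter_upwards [hL1] with k hk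
    rw [Real.norm_eq_abs]
    have := key b T (ℓ k) hb hT hk
    rw [← hCeq] at this
    exact this
  · exact Filter.Tendsto.div_atTop tendsto_const_nhds hLtop
end
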